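/- For all integers m, n, r ≥ 0 and every integer k, in ℤ[q]: L_q^{(r)}(m+n,k) = Σ_{i=0}^{n} Σ_{j=0}^{k} q^{i(j+m+2r)} · [j+m+2r]_q^{⟨n-i⟩} · qbinom(n,i) · L_q^{(r)}(m,j) · L_q(i,k-j). -/
import Mathlib


open Finset Polynomial

/-- The q-integer [n]_q = 1 + q + ⋯ + q^{n-1} in ℤ[q]. -/
noncomputable def qint (n : ℕ) : Polynomial ℤ := ∑ i ∈ range n, X ^ i

/-- The q-rising factorial [n]_q^{⟨m⟩} = ∏_{i=n}^{n+m-1} [i]_q. -/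
noncomputable def qrise (n m : ℕ) : Polynomial ℤ := ∏ i ∈ range m, qint (n + i)

/-- The q-binomial coefficient. -/
noncomputable def qbinom : ℕ → ℕ → Polynomial ℤ
  | _, 0 => 1
  | 0, _ + 1 => 0
  | n + 1, k + 1 => qbinom n k + X ^ (k + 1) * qbinom n (k + 1)

/-- The q-Lah numbers (natural-number index version). -/
noncomputable def qLahNat : ℕ → ℕ → Polynomial ℤ
  | 0, 0 => 1
  | 0, _ + 1 => 0
  | _ + 1, 0 => 0
  | n + 1, k + 1 => X ^ (n + k) * qLahNat n k + qint (n + k + 1) * qLahNat n (k + 1)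

/-- The q-Lah numbers, vanishing for negative second index. -/
noncomputable def qLah (n : ℕ) (k : ℤ) : Polynomial ℤ :=
  if 0 ≤ k then qLahNat n k.toNat else 0

/-- The q-r-Lah numbers. -/
noncomputable def qrLah (r n : ℕ) (k : ℤ) : Polynomial ℤ :=
  ∑ i ∈ range (n + 1), X ^ (r * (2 * i + r - 1)) * qrise (2 * r) (n - i) * qbinom n i *
    qLah i k

lemma qbinom_zero (n : ℕ) : qbinom n 0 = 1 := by cases n <;> rfl
lemma qbinom_zero_succ (k : ℕ) : qbinom 0 (k+1) = 0 := rfl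
lemma qLahNat_succ_zero (n : ℕ) : qLahNat (n+1) 0 = 0 := rfl
lemma qint_zero : qint 0 = 0 := by simp [qint]
lemma qint_succ (n : ℕ) : qint (n+1) = qint n + X ^ n := Finset.sum_range_succ _ _
lemma qint_succ' (n : ℕ) : qint (n+1) = 1 + X * qint n := by
  rw [qint, Finset.sum_range_succ', pow_zero, qint, Finset.mul_sum]
  simp [pow_succ, mul_comm, add_comm]
lemma qint_add (x y : ℕ) : qint (x + y) = qint x + X ^ x * qint y := by
  induction y with
  | zero => simp [qint_zero]
  | succ y ih =>
    rw [← Nat.add_assoc, qint_succ, ih, qint_succ, mul_add, ← add_assoc, pow_add]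
lemma qrise_succ (a m : ℕ) : qrise a (m+1) = qrise a m * qint (a + m) :=
  Finset.prod_range_succ _ _
lemma qrise_zero (a : ℕ) : qrise a 0 = 1 := rfl
lemma qbinom_eq_zero : ∀ {n k : ℕ}, n < k → qbinom n k = 0 := by
  intro n
  induction n with
  | zero => intro k h; match k, h with | k+1, _ => rfl
  | succ n ih =>
    intro k h
    match k, h with
    | k+1, h =>
      show qbinom n k + X ^ (k+1) * qbinom n (k+1) = 0
      rw [ih (by omega), ih (by omega), mul_zero, add_zero]

lemma qbinom_one : ∀ n : ℕ, qbinom n 1 = qint n := by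
  intro n
  induction n with
  | zero => rw [qint_zero]; rfl
  | succ n ih =>
    show qbinom n 0 + X ^ 1 * qbinom n 1 = _
    rw [qbinom_zero, ih, qint_succ', pow_one]

lemma pascal2 : ∀ (n k : ℕ), qbinom (n+1) (k+1) = X ^ (n - k) * qbinom n k + qbinom n (k+1) := by
  intro n
  induction n with
  | zero =>
    intro k
    show qbinom 0 k + X ^ (k+1) * qbinom 0 (k+1) = _
    cases k with
    | zero => simp [qbinom_zero, qbinom_zero_succ]
    | succ k => simp [qbinom_zero_succ]
  | succ n ih =>
    intro k
    cases k with
    | zero =>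
      show qbinom (n+1) 0 + X ^ 1 * qbinom (n+1) 1 = _
      rw [qbinom_zero, qbinom_one, Nat.sub_zero, mul_one, pow_one]
      have h1 := qint_succ' (n+1)
      have h2 := qint_succ (n+1)
      linear_combination h2 - h1
    | succ k =>
      conv_rhs => rw [show qbinom (n+1) (k+1) = qbinom n k + X ^ (k+1) * qbinom n (k+1) from rfl,
        show qbinom (n+1) (k+2) = qbinom n (k+1) + X ^ (k+2) * qbinom n (k+2) from rfl]
      show qbinom (n+1) (k+1) + X ^ (k+2) * qbinom (n+1) (k+2) = _
      rw [ih k, ih (k+1), Nat.succ_sub_succ]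
      have key : X ^ (k+2) * X ^ (n-(k+1)) * qbinom n (k+1)
          = X ^ (n-k) * X ^ (k+1) * qbinom n (k+1) := by
        by_cases h : k + 1 ≤ n
        · rw [← pow_add, ← pow_add]; congr 2; omega
        · rw [qbinom_eq_zero (by omega), mul_zero, mul_zero]
      linear_combination key

lemma qLah_neg {n : ℕ} {t : ℤ} (h : t < 0) : qLah n t = 0 := by
  rw [qLah, if_neg (by omega)]

lemma qLah_succ (n : ℕ) (t : ℤ) :
    qLah (n+1) t = X ^ (n + (t-1).toNat) * qLah n (t-1) + qint (n + t.toNat) * qLah n t := by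
  rcases lt_trichotomy t 0 with h | h | h
  · rw [qLah_neg h, qLah_neg h, qLah_neg (by omega : t - 1 < 0), mul_zero, mul_zero, add_zero]
  · subst h
    rw [qLah_neg (by norm_num : (0:ℤ) - 1 < 0), mul_zero, zero_add]
    rw [qLah, if_pos le_rfl, qLah, if_pos le_rfl]
    simp only [Int.toNat_zero, Nat.add_zero]
    rw [qLahNat_succ_zero]
    cases n with
    | zero => rw [qint_zero, zero_mul]
    | succ m => rw [qLahNat_succ_zero, mul_zero]
  · obtain ⟨u, rfl⟩ : ∃ u : ℕ, t = (u : ℤ) + 1 := ⟨(t-1).toNat, by omega⟩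
    rw [qLah, if_pos (by omega), qLah, if_pos (by omega), qLah, if_pos (by omega)]
    have h1 : ((u:ℤ)+1).toNat = u + 1 := by omega
    have h2 : ((u:ℤ)+1-1).toNat = u := by omega
    rw [h1, h2]
    show qLahNat (n+1) (u+1) = _
    rw [show qLahNat (n+1) (u+1)
        = X ^ (n+u) * qLahNat n u + qint (n+u+1) * qLahNat n (u+1) from rfl]
    rw [Nat.add_assoc]

lemma qLah_zero_left (t : ℤ) : qLah 0 t = if t = 0 then 1 else 0 := by
  rcases lt_trichotomy t 0 with h | h | h
  · rw [qLah_neg h, if_neg (by omega)]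
  · subst h; rw [qLah, if_pos le_rfl, if_pos rfl]; rfl
  · obtain ⟨u, rfl⟩ : ∃ u : ℕ, t = (u : ℤ) + 1 := ⟨(t-1).toNat, by omega⟩
    rw [qLah, if_pos (by omega), if_neg (by omega)]
    rw [show ((u:ℤ)+1).toNat = u + 1 by omega]
    rfl

lemma star (a n : ℕ) (t : ℤ) :
    (∑ i ∈ range (n+1+1), X ^ (i*a) * qrise a (n+1-i) * qbinom (n+1) i * qLah i t)
    = X ^ (n + a + (t-1).toNat) *
        ∑ i ∈ range (n+1), X ^ (i*a) * qrise a (n-i) * qbinom n i * qLah i (t-1)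
    + qint (n + a + t.toNat) *
        ∑ i ∈ range (n+1), X ^ (i*a) * qrise a (n-i) * qbinom n i * qLah i t := by
  rw [Finset.sum_range_succ']
  have step1 : ∀ i ∈ range (n+1),
      X ^ ((i+1)*a) * qrise a (n+1-(i+1)) * qbinom (n+1) (i+1) * qLah (i+1) t
      = (X ^ ((i+1)*a + (n-i)) * qrise a (n-i) * qbinom n i * qLah (i+1) t)
        + (X ^ ((i+1)*a) * qrise a (n-i) * qbinom n (i+1) * qLah (i+1) t) := by
    intro i hi
    rw [Nat.succ_sub_succ, pascal2]
    ring
  rw [Finset.sum_congr rfl step1, Finset.sum_add_distrib, add_assoc]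
  have hB : (∑ i ∈ range (n+1), X ^ ((i+1)*a) * qrise a (n-i) * qbinom n (i+1) * qLah (i+1) t)
      + X ^ (0*a) * qrise a (n+1-0) * qbinom (n+1) 0 * qLah 0 t
      = ∑ i ∈ range (n+1), X ^ (i*a) * qrise a (n+1-i) * qbinom n i * qLah i t := by
    have h0 : X ^ (0*a) * qrise a (n+1-0) * qbinom (n+1) 0 * qLah 0 t
        = X ^ (0*a) * qrise a (n+1-0) * qbinom n 0 * qLah 0 t := by
      rw [qbinom_zero, qbinom_zero]
    have hsh : ∀ i ∈ range (n+1),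
        X ^ ((i+1)*a) * qrise a (n-i) * qbinom n (i+1) * qLah (i+1) t
        = X ^ ((i+1)*a) * qrise a (n+1-(i+1)) * qbinom n (i+1) * qLah (i+1) t := by
      intro i hi; rw [Nat.succ_sub_succ]
    rw [h0, Finset.sum_congr rfl hsh,
      ← Finset.sum_range_succ' (fun i => X ^ (i*a) * qrise a (n+1-i) * qbinom n i * qLah i t) (n+1),
      Finset.sum_range_succ, qbinom_eq_zero (Nat.lt_succ_self n), mul_zero, zero_mul, add_zero]
  rw [hB, Finset.mul_sum, Finset.mul_sum, ← Finset.sum_add_distrib, ← Finset.sum_add_distrib]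
  refine Finset.sum_congr rfl fun i hi => ?_
  obtain ⟨d, hd⟩ := Nat.exists_eq_add_of_le (Nat.lt_succ_iff.mp (Finset.mem_range.mp hi))
  subst hd
  have e1 : i + d - i = d := by omega
  have e2 : i + d + 1 - i = d + 1 := by omega
  rw [e1, e2, qrise_succ, qLah_succ]
  conv_rhs => rw [show i + d + a + t.toNat = (a + d) + (i + t.toNat) from by omega, qint_add]
  ring

lemma qrLah_eq (r N : ℕ) (k : ℤ) :
    (∑ i ∈ range (N + 1), X ^ (r * (2 * i + r - 1)) * qrise (2 * r) (N - i) * qbinom N i *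
      qLah i k)
    = X ^ (r*(r-1)) * ∑ i ∈ range (N+1),
        X ^ (i*(2*r)) * qrise (2*r) (N-i) * qbinom N i * qLah i k := by
  rw [Finset.mul_sum]
  refine Finset.sum_congr rfl fun i _ => ?_
  have h : r * (2*i + r - 1) = r*(r-1) + i*(2*r) := by
    cases r with
    | zero => simp
    | succ s =>
      rw [show 2*i + (s+1) - 1 = 2*i + s from by omega, Nat.add_sub_cancel]
      ring
  rw [h, pow_add]; ring

lemma qrLah_neg {r N : ℕ} {k : ℤ} (h : k < 0) : qrLah r N k = 0 := by
  rw [qrLah]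
  exact Finset.sum_eq_zero fun i _ => by rw [qLah_neg h, mul_zero]

lemma qrLah_rec (r N : ℕ) (k : ℤ) :
    qrLah r (N+1) k = X ^ (N + 2*r + (k-1).toNat) * qrLah r N (k-1)
      + qint (N + 2*r + k.toNat) * qrLah r N k := by
  rw [qrLah, qrLah, qrLah, qrLah_eq, qrLah_eq, qrLah_eq, star (2*r) N k]
  ring

theorem qrLah_add (m n r : ℕ) (k : ℤ) :
    qrLah r (m + n) k =
      ∑ i ∈ range (n + 1), ∑ j ∈ Icc (0 : ℤ) k,
        X ^ (i * (j.toNat + m + 2 * r)) * qrise (j.toNat + m + 2 * r) (n - i) * qbinom n i *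
          qrLah r m j * qLah i (k - j) := by
  induction n generalizing k with
  | zero =>
    rw [Finset.sum_range_one]
    simp only [Nat.add_zero, Nat.zero_mul, zero_mul, pow_zero, Nat.sub_zero, Nat.sub_self,
      qrise_zero, qbinom_zero, one_mul, mul_one]
    by_cases hk : 0 ≤ k
    · rw [Finset.sum_eq_single_of_mem k (by simp [hk])
        (fun j hj hne => by rw [qLah_zero_left, if_neg (by omega), mul_zero])]
      rw [qLah_zero_left, sub_self, if_pos rfl, mul_one]
    · rw [Finset.Icc_eq_empty (by omega), Finset.sum_empty, qrLah_neg (by omega)]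
  | succ n ih =>
    rw [show m + (n+1) = (m+n)+1 from rfl, qrLah_rec r (m+n) k, ih (k-1), ih k]
    rw [Finset.sum_comm (s := range (n+1+1)) (t := Icc (0:ℤ) k)]
    rw [Finset.sum_comm (s := range (n+1)) (t := Icc (0:ℤ) (k-1))]
    rw [Finset.sum_comm (s := range (n+1)) (t := Icc (0:ℤ) k)]
    have hext : (∑ j ∈ Icc (0:ℤ) (k-1), ∑ i ∈ range (n+1),
          X ^ (i * (j.toNat + m + 2 * r)) * qrise (j.toNat + m + 2 * r) (n - i) * qbinom n i *
            qrLah r m j * qLah i (k - 1 - j))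
        = ∑ j ∈ Icc (0:ℤ) k, ∑ i ∈ range (n+1),
          X ^ (i * (j.toNat + m + 2 * r)) * qrise (j.toNat + m + 2 * r) (n - i) * qbinom n i *
            qrLah r m j * qLah i (k - 1 - j) := by
      apply Finset.sum_subset (Finset.Icc_subset_Icc le_rfl (by omega))
      intro j hj hj'
      refine Finset.sum_eq_zero fun i _ => ?_
      rw [Finset.mem_Icc] at hj
      rw [Finset.mem_Icc] at hj'
      rw [qLah_neg (by omega : k - 1 - j < 0), mul_zero]
    rw [hext, Finset.mul_sum, Finset.mul_sum, ← Finset.sum_add_distrib]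
    refine Finset.sum_congr rfl fun j hj => ?_
    rw [Finset.mem_Icc] at hj
    have f1 : (∑ i ∈ range (n+1),
          X ^ (i * (j.toNat + m + 2 * r)) * qrise (j.toNat + m + 2 * r) (n - i) * qbinom n i *
            qrLah r m j * qLah i (k - 1 - j))
        = qrLah r m j * ∑ i ∈ range (n+1),
            X ^ (i * (j.toNat + m + 2 * r)) * qrise (j.toNat + m + 2 * r) (n - i) * qbinom n i *
              qLah i (k - j - 1) := by
      rw [Finset.mul_sum]
      exact Finset.sum_congr rfl fun i _ => by rw [show k - 1 - j = k - j - 1 from by ring]; ring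
    have f2 : (∑ i ∈ range (n+1),
          X ^ (i * (j.toNat + m + 2 * r)) * qrise (j.toNat + m + 2 * r) (n - i) * qbinom n i *
            qrLah r m j * qLah i (k - j))
        = qrLah r m j * ∑ i ∈ range (n+1),
            X ^ (i * (j.toNat + m + 2 * r)) * qrise (j.toNat + m + 2 * r) (n - i) * qbinom n i *
              qLah i (k - j) := by
      rw [Finset.mul_sum]
      exact Finset.sum_congr rfl fun i _ => by ring
    have f3 : (∑ i ∈ range (n+1+1),
          X ^ (i * (j.toNat + m + 2 * r)) * qrise (j.toNat + m + 2 * r) (n + 1 - i) *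
            qbinom (n+1) i * qrLah r m j * qLah i (k - j))
        = qrLah r m j * ∑ i ∈ range (n+1+1),
            X ^ (i * (j.toNat + m + 2 * r)) * qrise (j.toNat + m + 2 * r) (n + 1 - i) *
              qbinom (n+1) i * qLah i (k - j) := by
      rw [Finset.mul_sum]
      exact Finset.sum_congr rfl fun i _ => by ring
    rw [f1, f2, f3, star (j.toNat + m + 2*r) n (k - j)]
    have hE2 : m + n + 2*r + k.toNat = n + (j.toNat + m + 2*r) + (k - j).toNat := by omega
    by_cases hjk : j = k
    · subst hjk
      have hS1 : (∑ i ∈ range (n+1),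
            X ^ (i * (j.toNat + m + 2 * r)) * qrise (j.toNat + m + 2 * r) (n - i) * qbinom n i *
              qLah i (j - j - 1)) = 0 :=
        Finset.sum_eq_zero fun i _ => by rw [qLah_neg (by omega : j - j - 1 < 0), mul_zero]
      rw [hS1, hE2]
      ring
    · have hE1 : m + n + 2*r + (k-1).toNat = n + (j.toNat + m + 2*r) + (k - j - 1).toNat := by
        omega
      rw [hE1, hE2]
      ring
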